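/- arXiv:1501.06373 — 2 statements merged into one kernel-verified Lean document; each statement's English description precedes it below -/
import Mathlib

section
/- Let (M, τ) be a von Neumann algebra with a faithful normal tracial state, and let a, b ∈ M be free Haar unitaries. Then the family { a^k b^{-k} : k ∈ ℕ, k ≥ 1 } is a free family of Haar unitaries in (M, τ). -/
open scoped ComplexInnerProductSpace

namespace FreeProductPaper

variable {H : Type*} [NormedAddCommGroup H] [InnerProductSpace ℂ H] [CompleteSpace H]

/-- A state on `B(H)`: a unital positive linear functional. -/
def IsStateOn (φ : (H →L[ℂ] H) →ₗ[ℂ] ℂ) : Prop :=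
  φ 1 = 1 ∧ ∀ x : H →L[ℂ] H, 0 ≤ (φ (star x * x)).re ∧ (φ (star x * x)).im = 0

/-- An `A`-central state on `B(H)`. -/
def IsCentralState (A : VonNeumannAlgebra H) (φ : (H →L[ℂ] H) →ₗ[ℂ] ℂ) : Prop :=
  IsStateOn φ ∧ ∀ a ∈ A, ∀ x : H →L[ℂ] H, φ (a * x) = φ (x * a)

/-- A von Neumann algebra is amenable iff it admits a central state on `B(H)`. -/
def IsAmenable (A : VonNeumannAlgebra H) : Prop :=
  ∃ φ : (H →L[ℂ] H) →ₗ[ℂ] ℂ, IsCentralState A φ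

def IsProjection (p : H →L[ℂ] H) : Prop := IsSelfAdjoint p ∧ p * p = p

/-- A (sub)set of `B(H)` is diffuse if it has no nonzero minimal projections, i.e. every
nonzero projection in it dominates a strictly smaller nonzero projection in it. -/
def IsDiffuseSet (S : Set (H →L[ℂ] H)) : Prop :=
  ∀ p ∈ S, IsProjection p → p ≠ 0 →
    ∃ q ∈ S, IsProjection q ∧ q * p = q ∧ q ≠ 0 ∧ q ≠ p

/-- `ξ` is a unit trace vector for `M`, inducing the faithful (normal, since it is a vector
state) tracial state `x ↦ ⟪ξ, x ξ⟫`. -/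
structure IsTraceVector (M : VonNeumannAlgebra H) (ξ : H) : Prop where
  norm_one : ‖ξ‖ = 1
  tracial : ∀ x ∈ M, ∀ y ∈ M, ⟪ξ, (x * y) ξ⟫ = ⟪ξ, (y * x) ξ⟫
  separating : ∀ x ∈ M, x ξ = 0 → x = 0

/-- A family of subsets of `B(H)` is free with respect to `τ`:
alternating products of centered elements are centered. -/
def IsFreeFamily {ι : Type*} (τ : (H →L[ℂ] H) → ℂ) (S : ι → Set (H →L[ℂ] H)) : Prop :=
  ∀ (n : ℕ), 0 < n → ∀ (x : Fin n → (H →L[ℂ] H)) (g : Fin n → ι),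
    (∀ j, x j ∈ S (g j)) → (∀ j, τ (x j) = 0) →
    (∀ (j : ℕ) (h : j + 1 < n), g ⟨j, by omega⟩ ≠ g ⟨j + 1, h⟩) →
    τ ((List.ofFn x).prod) = 0

/-- A Haar unitary with respect to `τ`: a unitary all of whose nonzero powers are centered. -/
def IsHaarUnitary (τ : (H →L[ℂ] H) → ℂ) (u : H →L[ℂ] H) : Prop :=
  u ∈ unitary (H →L[ℂ] H) ∧
    ∀ n : ℕ, 0 < n → τ (u ^ n) = 0 ∧ τ ((star u) ^ n) = 0


open scoped Pointwise

section Aux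

variable {H : Type*} [NormedAddCommGroup H] [InnerProductSpace ℂ H] [CompleteSpace H]

local notation "BH" => H →L[ℂ] H

/-- the vector state as a linear functional -/
noncomputable def tauL (ξ : H) : BH →ₗ[ℂ] ℂ where
  toFun z := ⟪ξ, z ξ⟫
  map_add' x y := by simp [inner_add_right]
  map_smul' c x := by simp [inner_smul_right]

/-- alternating word with nonzero exponents -/
def AltWord (l : List (Bool × ℤ)) : Prop :=
  l.Chain' (fun p q => p.1 ≠ q.1) ∧ ∀ p ∈ l, p.2 ≠ 0

noncomputable def wletter (au bu : unitary BH) (p : Bool × ℤ) : BH :=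
  if p.1 then ((au ^ p.2 : unitary BH) : BH) else ((bu ^ p.2 : unitary BH) : BH)

lemma coe_zpow_natCast (v : unitary BH) (n : ℕ) :
    ((v ^ (n : ℤ) : unitary BH) : BH) = (v : BH) ^ n := by
  rw [zpow_natCast]; exact SubmonoidClass.coe_pow v n

lemma coe_zpow_neg_natCast (v : unitary BH) (n : ℕ) :
    ((v ^ (-(n : ℤ)) : unitary BH) : BH) = (star (v : BH)) ^ n := by
  rw [zpow_neg, ← Unitary.star_eq_inv, zpow_natCast, ← star_pow]
  rfl

lemma coe_zpow_negSucc (v : unitary BH) (m : ℕ) :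
    ((v ^ (Int.negSucc m) : unitary BH) : BH) = (star (v : BH)) ^ (m + 1) := by
  rw [zpow_negSucc, ← Unitary.star_eq_inv, ← star_pow]
  rfl

lemma coe_zpow_add (v : unitary BH) (m n : ℤ) :
    ((v ^ (m + n) : unitary BH) : BH) = ((v ^ m : unitary BH) : BH) * ((v ^ n : unitary BH) : BH) := by
  rw [zpow_add]; rfl

lemma mem_adjoin_coe_zpow (v : unitary BH) (n : ℤ) :
    ((v ^ n : unitary BH) : BH) ∈ StarAlgebra.adjoin ℂ {(v : BH)} := by
  have hv : (v : BH) ∈ StarAlgebra.adjoin ℂ {(v : BH)} :=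
    StarAlgebra.subset_adjoin ℂ _ rfl
  obtain ⟨m, rfl | rfl⟩ := Int.eq_nat_or_neg n
  · rw [coe_zpow_natCast]
    exact pow_mem hv m
  · rw [coe_zpow_neg_natCast]
    exact pow_mem (star_mem hv) m

lemma tauL_coe_zpow_eq_zero (τL : BH →ₗ[ℂ] ℂ) (v : unitary BH)
    (hv : IsHaarUnitary ⇑τL (v : BH)) {n : ℤ} (hn : n ≠ 0) :
    τL ((v ^ n : unitary BH) : BH) = 0 := by
  obtain ⟨m, rfl | rfl⟩ := Int.eq_nat_or_neg n
  · rw [coe_zpow_natCast]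
    refine (hv.2 m ?_).1
    exact Nat.pos_of_ne_zero (by simpa using hn)
  · rw [coe_zpow_neg_natCast]
    refine (hv.2 m ?_).2
    exact Nat.pos_of_ne_zero (by simpa using hn)

/-! ### Pure list combinatorics of alternating words -/

lemma altWord_append {L B : List (Bool × ℤ)} (hL : AltWord L) (hB : AltWord B)
    (h : ∀ p ∈ L.getLast?, ∀ q ∈ B.head?, p.1 ≠ q.1) : AltWord (L ++ B) := by
  constructor
  · exact List.isChain_append.mpr ⟨hL.1, hB.1, h⟩
  · intro p hp
    rcases List.mem_append.mp hp with h' | h'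
    exacts [hL.2 p h', hB.2 p h']

lemma altWord_merge {L : List (Bool × ℤ)} {t : Bool} {e e' : ℤ} {rest : List (Bool × ℤ)}
    (hL : AltWord L) (hlast : L.getLast? = some (t, e))
    (hB : AltWord ((t, e') :: rest)) (hee : e + e' ≠ 0) :
    AltWord (L.dropLast ++ (t, e + e') :: rest) := by
  have hLd : L.dropLast ++ [(t, e)] = L := List.dropLast_append_getLast? _ hlast
  have hch : List.Chain' (fun p q : Bool × ℤ => p.1 ≠ q.1) (L.dropLast ++ [(t, e)]) := by
    rw [hLd]; exact hL.1
  simp only [List.Chain', List.isChain_append] at hch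
  constructor
  · refine List.isChain_append.mpr ⟨hch.1, ?_, ?_⟩
    · refine List.isChain_cons.mpr ⟨?_, (List.isChain_cons.mp hB.1).2⟩
      exact fun y hy => (List.isChain_cons.mp hB.1).1 y hy
    · intro p hp q hq
      rw [List.head?_cons, Option.mem_some_iff] at hq
      subst hq
      exact hch.2.2 p hp (t, e) (by simp)
  · intro p hp
    rcases List.mem_append.mp hp with h' | h'
    · exact hL.2 p ((List.dropLast_sublist L).subset h')
    · rcases List.mem_cons.mp h' with h'' | h''
      · subst h''; exact hee
      · exact hB.2 p (List.mem_cons_of_mem _ h'')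

lemma map_prod_merge (au bu : unitary BH) (L : List (Bool × ℤ)) (t : Bool) (e e' : ℤ)
    (hlast : L.getLast? = some (t, e)) (rest : List (Bool × ℤ)) :
    ((L.dropLast ++ (t, e + e') :: rest).map (wletter au bu)).prod
      = ((L.map (wletter au bu)).prod) * (((t, e') :: rest).map (wletter au bu)).prod := by
  have key : wletter au bu (t, e + e') = wletter au bu (t, e) * wletter au bu (t, e') := by
    cases t <;> simp [wletter, coe_zpow_add]
  conv_rhs => rw [← List.dropLast_append_getLast? _ hlast]
  simp only [List.map_append, List.prod_append, List.map_cons, List.prod_cons, key,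
    List.map_nil, List.prod_nil, mul_one, mul_assoc]

/-! ### Blocks: the alternating words representing powers of `a^k b^{-k}` -/

def genw (x y : Bool × ℤ) (n : ℕ) : List (Bool × ℤ) := (List.replicate n [x, y]).flatten

lemma genw_succ (x y : Bool × ℤ) (n : ℕ) : genw x y (n + 1) = x :: y :: genw x y n := by
  simp [genw, List.replicate_succ]

lemma genw_head? (x y : Bool × ℤ) {n : ℕ} (hn : n ≠ 0) : (genw x y n).head? = some x := by
  obtain ⟨m, rfl⟩ := Nat.exists_eq_succ_of_ne_zero hn
  rw [genw_succ]; rfl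

lemma genw_ne_nil (x y : Bool × ℤ) {n : ℕ} (hn : n ≠ 0) : genw x y n ≠ [] := by
  obtain ⟨m, rfl⟩ := Nat.exists_eq_succ_of_ne_zero hn
  rw [genw_succ]; exact List.cons_ne_nil _ _

lemma genw_getLast? (x y : Bool × ℤ) : ∀ {n : ℕ}, n ≠ 0 → (genw x y n).getLast? = some y := by
  intro n
  induction n with
  | zero => intro h; exact absurd rfl h
  | succ m ih =>
    intro _
    rcases Nat.eq_zero_or_pos m with rfl | hm
    · rfl
    · obtain ⟨c, l', hc⟩ := List.exists_cons_of_ne_nil (genw_ne_nil x y (Nat.pos_iff_ne_zero.mp hm))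
      rw [genw_succ, List.getLast?_cons_cons, hc, List.getLast?_cons_cons, ← hc,
        ih (Nat.pos_iff_ne_zero.mp hm)]

lemma genw_mem (x y : Bool × ℤ) : ∀ {n : ℕ}, ∀ p ∈ genw x y n, p = x ∨ p = y := by
  intro n
  induction n with
  | zero => intro p hp; simp [genw] at hp
  | succ m ih =>
    intro p hp
    rw [genw_succ] at hp
    rcases List.mem_cons.mp hp with h | h
    · exact Or.inl h
    rcases List.mem_cons.mp h with h | h
    · exact Or.inr h
    · exact ih p h

lemma genw_chain' (x y : Bool × ℤ) (hxy : x.1 ≠ y.1) :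
    ∀ {n : ℕ}, List.Chain' (fun p q : Bool × ℤ => p.1 ≠ q.1) (genw x y n) := by
  intro n
  induction n with
  | zero => simp [genw, List.Chain']
  | succ m ih =>
    rw [genw_succ]
    refine List.isChain_cons_cons.mpr ⟨hxy, List.isChain_cons.mpr ⟨?_, ih⟩⟩
    intro q hq
    rcases Nat.eq_zero_or_pos m with rfl | hm
    · simp [genw] at hq
    · rw [genw_head? x y (by omega), Option.mem_some_iff] at hq
      subst hq
      exact hxy.symm

lemma genw_alt (x y : Bool × ℤ) (hxy : x.1 ≠ y.1) (hx : x.2 ≠ 0) (hy : y.2 ≠ 0) (n : ℕ) :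
    AltWord (genw x y n) := by
  refine ⟨genw_chain' x y hxy, ?_⟩
  intro p hp
  rcases genw_mem x y p hp with rfl | rfl
  exacts [hx, hy]

lemma genw_map_prod (au bu : unitary BH) (x y : Bool × ℤ) (n : ℕ) :
    ((genw x y n).map (wletter au bu)).prod = (wletter au bu x * wletter au bu y) ^ n := by
  induction n with
  | zero => simp [genw]
  | succ m ih => rw [genw_succ, pow_succ']; simp only [List.map_cons, List.prod_cons, ih, mul_assoc]

/-! ### Blocks for powers of `u_k` -/

def htag (m : ℤ) : Bool := decide (0 < m)
def etag (m : ℤ) : Bool := decide (m < 0)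

noncomputable def Uu (au bu : unitary BH) (k : ℕ) : unitary BH :=
  au ^ (k : ℤ) * bu ^ (-(k : ℤ))

def blk (k : ℕ) (m : ℤ) : List (Bool × ℤ) :=
  if 0 < m then genw (true, (k : ℤ)) (false, -(k : ℤ)) m.toNat
  else genw (false, (k : ℤ)) (true, -(k : ℤ)) (-m).toNat

lemma blk_alt {k : ℕ} (hk : k ≠ 0) (m : ℤ) : AltWord (blk k m) := by
  have h1 : ((k : ℤ)) ≠ 0 := by exact_mod_cast hk
  have h2 : (-(k : ℤ)) ≠ 0 := by omega
  unfold blk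
  split
  · exact genw_alt _ _ (by simp) h1 h2 _
  · exact genw_alt _ _ (by simp) h1 h2 _

lemma blk_ne_nil {k : ℕ} {m : ℤ} (hm : m ≠ 0) : blk k m ≠ [] := by
  unfold blk
  split
  · exact genw_ne_nil _ _ (by omega)
  · exact genw_ne_nil _ _ (by omega)

lemma blk_head? {k : ℕ} {m : ℤ} (hm : m ≠ 0) : (blk k m).head? = some (htag m, (k : ℤ)) := by
  unfold blk htag
  split <;> rename_i h
  · rw [genw_head? _ _ (by omega)]
    simp [h]
  · rw [genw_head? _ _ (by omega)]
    simp [h]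

lemma blk_getLast? {k : ℕ} {m : ℤ} (hm : m ≠ 0) :
    (blk k m).getLast? = some (etag m, -(k : ℤ)) := by
  unfold blk etag
  split <;> rename_i h
  · rw [genw_getLast? _ _ (by omega)]
    simp [show ¬ m < 0 by omega]
  · rw [genw_getLast? _ _ (by omega)]
    simp [show m < 0 by omega]

lemma blk_cons {k : ℕ} {m : ℤ} (hm : m ≠ 0) :
    ∃ rest, blk k m = (htag m, (k : ℤ)) :: rest ∧ rest ≠ [] ∧
      rest.getLast? = some (etag m, -(k : ℤ)) := by
  obtain ⟨c, rest, hc⟩ := List.exists_cons_of_ne_nil (blk_ne_nil (k := k) hm)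
  have hhd : c = (htag m, (k : ℤ)) := by
    have := blk_head? (k := k) hm
    rw [hc] at this
    simpa using this
  subst hhd
  have hrne : rest ≠ [] := by
    intro hrest
    subst hrest
    have := blk_getLast? (k := k) hm
    rw [hc] at this
    simp at this
    have ht : etag m = htag m := this.1.symm
    unfold etag htag at ht
    simp only [decide_eq_decide] at ht
    omega
  refine ⟨rest, hc, hrne, ?_⟩
  obtain ⟨c', rest', hc'⟩ := List.exists_cons_of_ne_nil hrne
  have := blk_getLast? (k := k) hm
  rw [hc, hc', List.getLast?_cons_cons] at this
  rw [hc']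
  exact this

lemma blk_map_prod (au bu : unitary BH) {k : ℕ} {m : ℤ} (hm : m ≠ 0) :
    ((blk k m).map (wletter au bu)).prod = ((Uu au bu k ^ m : unitary BH) : BH) := by
  rcases lt_or_gt_of_ne hm with hneg | hpos
  · -- m < 0
    have hif : blk k m = genw (false, (k : ℤ)) (true, -(k : ℤ)) (-m).toNat := by
      unfold blk; rw [if_neg (by omega)]
    set n : ℕ := (-m).toNat with hn
    have hm' : m = -(n : ℤ) := by omega
    have hinv : (Uu au bu k)⁻¹ = bu ^ (k : ℤ) * au ^ (-(k : ℤ)) := by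
      unfold Uu
      rw [mul_inv_rev, ← zpow_neg, ← zpow_neg, neg_neg]
    have hU : (Uu au bu k ^ m : unitary BH) = (bu ^ (k : ℤ) * au ^ (-(k : ℤ))) ^ n := by
      rw [hm', zpow_neg, zpow_natCast, ← inv_pow, hinv]
    rw [hif, genw_map_prod, hU]
    have : wletter au bu (false, (k : ℤ)) * wletter au bu (true, -(k : ℤ))
        = ((bu ^ (k : ℤ) * au ^ (-(k : ℤ)) : unitary BH) : BH) := by
      simp [wletter]
    rw [this, SubmonoidClass.coe_pow]
  · -- 0 < m
    have hif : blk k m = genw (true, (k : ℤ)) (false, -(k : ℤ)) m.toNat := by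
      unfold blk; rw [if_pos hpos]
    set n : ℕ := m.toNat with hn
    have hm' : m = (n : ℤ) := by omega
    have hU : (Uu au bu k ^ m : unitary BH) = (au ^ (k : ℤ) * bu ^ (-(k : ℤ))) ^ n := by
      rw [hm', zpow_natCast]; rfl
    rw [hif, genw_map_prod, hU]
    have : wletter au bu (true, (k : ℤ)) * wletter au bu (false, -(k : ℤ))
        = ((au ^ (k : ℤ) * bu ^ (-(k : ℤ)) : unitary BH) : BH) := by
      simp [wletter]
    rw [this, SubmonoidClass.coe_pow]

/-! ### The word lemma -/

lemma tau_word (τL : BH →ₗ[ℂ] ℂ) (au bu : unitary BH)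
    (ha : IsHaarUnitary ⇑τL (au : BH)) (hb : IsHaarUnitary ⇑τL (bu : BH))
    (hfree : IsFreeFamily ⇑τL (fun i : Bool =>
      if i then ((StarAlgebra.adjoin ℂ {(au : BH)} : StarSubalgebra ℂ BH) : Set BH)
      else ((StarAlgebra.adjoin ℂ {(bu : BH)} : StarSubalgebra ℂ BH) : Set BH)))
    (l : List (Bool × ℤ)) (hl : AltWord l) (hne : l ≠ []) :
    τL ((l.map (wletter au bu)).prod) = 0 := by
  have hlen : 0 < l.length := List.length_pos_iff.mpr hne
  have key := hfree l.length hlen (fun j => wletter au bu (l.get j)) (fun j => (l.get j).1)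
    ?_ ?_ ?_
  · rw [← List.ofFn_getElem_eq_map l (wletter au bu)]
    exact key
  · intro j
    rcases ht : (l.get j).1 with _ | _
    · simp only [Bool.false_eq_true, if_false, SetLike.mem_coe, wletter, ht]
      exact mem_adjoin_coe_zpow bu _
    · simp only [if_true, SetLike.mem_coe, wletter, ht]
      exact mem_adjoin_coe_zpow au _
  · intro j
    have hmem : l.get j ∈ l := List.get_mem l j
    have hnz : (l.get j).2 ≠ 0 := hl.2 _ hmem
    rcases ht : (l.get j).1 with _ | _
    · simp only [wletter, ht, Bool.false_eq_true, if_false]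
      exact tauL_coe_zpow_eq_zero τL bu hb hnz
    · simp only [wletter, ht, if_true]
      exact tauL_coe_zpow_eq_zero τL au ha hnz
  · intro j hj
    exact List.isChain_iff_getElem.mp hl.1 j (by omega)

/-! ### The inductive step: absorbing one more power of `u_{k'}` -/

lemma step (au bu : unitary BH) (k k' : ℕ) (hkk' : (k : ℤ) ≠ (k' : ℤ)) {m : ℤ} (hm : m ≠ 0)
    {W : List (Bool × ℤ)} (hW : AltWord W) {t : Bool}
    (hlast : W.getLast? = some (t, -(k : ℤ))) (hk' : k' ≠ 0) :
    ∃ W' : List (Bool × ℤ), AltWord W' ∧ W'.getLast? = some (etag m, -(k' : ℤ)) ∧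
      ((W'.map (wletter au bu)).prod)
        = ((W.map (wletter au bu)).prod) * ((Uu au bu k' ^ m : unitary BH) : BH) := by
  obtain ⟨rest, hblk, hrne, hrlast⟩ := blk_cons (k := k') hm
  by_cases hth : t = htag m
  · -- merge case
    refine ⟨W.dropLast ++ (t, -(k : ℤ) + (k' : ℤ)) :: rest, ?_, ?_, ?_⟩
    · refine altWord_merge hW hlast ?_ (by omega)
      rw [hth, ← hblk]
      exact blk_alt hk' m
    · rw [List.getLast?_append_of_ne_nil _ (List.cons_ne_nil _ _)]
      obtain ⟨c', rest', hc'⟩ := List.exists_cons_of_ne_nil hrne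
      rw [hc', List.getLast?_cons_cons, ← hc']
      exact hrlast
    · rw [map_prod_merge au bu W t _ _ hlast rest, ← blk_map_prod au bu hm, hblk, hth]
  · -- append case
    refine ⟨W ++ blk k' m, ?_, ?_, ?_⟩
    · refine altWord_append hW (blk_alt hk' m) ?_
      intro p hp q hq
      rw [hlast, Option.mem_some_iff] at hp
      rw [blk_head? hm, Option.mem_some_iff] at hq
      subst hp; subst hq
      exact hth
    · rw [List.getLast?_append_of_ne_nil _ (blk_ne_nil hm)]
      exact blk_getLast? hm
    · rw [List.map_append, List.prod_append, blk_map_prod au bu hm]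

/-! ### The main induction -/

noncomputable def Vk (au bu : unitary BH) (k : ℕ) : Submodule ℂ BH :=
  Submodule.span ℂ {x | ∃ n : ℤ, n ≠ 0 ∧ x = ((Uu au bu k ^ n : unitary BH) : BH)}

lemma main_ind (τL : BH →ₗ[ℂ] ℂ) (au bu : unitary BH)
    (ha : IsHaarUnitary ⇑τL (au : BH)) (hb : IsHaarUnitary ⇑τL (bu : BH))
    (hfree : IsFreeFamily ⇑τL (fun i : Bool =>
      if i then ((StarAlgebra.adjoin ℂ {(au : BH)} : StarSubalgebra ℂ BH) : Set BH)
      else ((StarAlgebra.adjoin ℂ {(bu : BH)} : StarSubalgebra ℂ BH) : Set BH)))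
    (ps : List ({k : ℕ // 0 < k} × BH)) :
    (∀ p ∈ ps, p.2 ∈ Vk au bu p.1) →
    ps.Chain' (fun p q => p.1 ≠ q.1) →
    ∀ (k0 : {k : ℕ // 0 < k}) (t : Bool) (W : List (Bool × ℤ)),
      AltWord W → W.getLast? = some (t, -((k0 : ℕ) : ℤ)) →
      (∀ p ∈ ps.head?, p.1 ≠ k0) →
      τL (((W.map (wletter au bu)).prod) * ((ps.map Prod.snd).prod)) = 0 := by
  induction ps with
  | nil =>
    intro _ _ k0 t W hW hlast _
    have hne : W ≠ [] := by
      intro h; subst h; simp at hlast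
    simpa using tau_word τL au bu ha hb hfree W hW hne
  | cons p rest ih =>
    intro hmem hchain k0 t W hW hlast hhead
    have hp : p.2 ∈ Vk au bu p.1 := hmem p List.mem_cons_self
    set C := (W.map (wletter au bu)).prod with hC
    set D := ((rest.map Prod.snd).prod) with hD
    have hgoal : ((p :: rest).map Prod.snd).prod = p.2 * D := by
      simp [hD]
    rw [hgoal, ← mul_assoc]
    let T : BH →ₗ[ℂ] ℂ := τL.comp ((LinearMap.mulRight ℂ D).comp (LinearMap.mulLeft ℂ C))
    have hker : Vk au bu p.1 ≤ LinearMap.ker T := by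
      rw [Vk, Submodule.span_le]
      rintro y ⟨n, hn, rfl⟩
      rw [SetLike.mem_coe, LinearMap.mem_ker]
      have hkk' : ((k0 : ℕ) : ℤ) ≠ ((p.1 : ℕ) : ℤ) := by
        have := hhead p (by simp)
        exact_mod_cast fun h => this (Subtype.ext (by exact_mod_cast h.symm))
      obtain ⟨W', hW', hlast', hprod⟩ :=
        step au bu (k0 : ℕ) (p.1 : ℕ) hkk' hn hW hlast (Nat.pos_iff_ne_zero.mp p.1.prop)
      simp only [T, LinearMap.comp_apply, LinearMap.mulRight_apply, LinearMap.mulLeft_apply]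
      rw [← hC] at hprod
      rw [← hprod]
      refine ih (fun q hq => hmem q (List.mem_cons_of_mem _ hq))
        (List.isChain_cons.mp hchain).2 p.1 (etag n) W' hW' hlast' ?_
      intro q hq
      exact ((List.isChain_cons.mp hchain).1 q hq).symm
    have := hker hp
    rw [LinearMap.mem_ker] at this
    simpa only [T, LinearMap.comp_apply, LinearMap.mulRight_apply, LinearMap.mulLeft_apply]
      using this

/-! ### From the star-algebra generated by `u_k` to the span of its nonzero powers -/

lemma mem_span_zpow_of_mem_adjoin (v : unitary BH) {x : BH}
    (hx : x ∈ StarAlgebra.adjoin ℂ {(v : BH)}) :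
    x ∈ Submodule.span ℂ (Set.range fun n : ℤ => ((v ^ n : unitary BH) : BH)) := by
  set S : Set BH := Set.range fun n : ℤ => ((v ^ n : unitary BH) : BH) with hS
  have hmul : S * S ⊆ S := by
    rintro z ⟨z1, hz1, z2, hz2, rfl⟩
    obtain ⟨m, rfl⟩ := hz1
    obtain ⟨n, rfl⟩ := hz2
    refine ⟨m + n, ?_⟩
    show ((v ^ (m + n) : unitary BH) : BH) = ((v ^ m : unitary BH) : BH) * ((v ^ n : unitary BH) : BH)
    exact coe_zpow_add v m n
  induction hx using StarAlgebra.adjoin_induction with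
  | mem y hy =>
    rw [Set.mem_singleton_iff] at hy
    subst hy
    refine Submodule.subset_span ⟨1, ?_⟩
    show ((v ^ (1 : ℤ) : unitary BH) : BH) = (v : BH)
    rw [zpow_one]
  | algebraMap r =>
    rw [Algebra.algebraMap_eq_smul_one]
    refine Submodule.smul_mem _ _ (Submodule.subset_span ⟨0, ?_⟩)
    show ((v ^ (0 : ℤ) : unitary BH) : BH) = (1 : BH)
    rw [zpow_zero]
    rfl
  | add x y _ _ hx hy => exact add_mem hx hy
  | mul x y _ _ hx hy =>
    have h := Submodule.mul_mem_mul hx hy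
    rw [Submodule.span_mul_span] at h
    exact Submodule.span_le.mpr (fun z hz => Submodule.subset_span (hmul hz)) h
  | star x _ hx =>
    refine Submodule.span_induction ?_ ?_ ?_ ?_ hx
    · rintro _ ⟨n, rfl⟩
      refine Submodule.subset_span ⟨-n, ?_⟩
      show ((v ^ (-n) : unitary BH) : BH) = star ((v ^ n : unitary BH) : BH)
      rw [zpow_neg, ← Unitary.star_eq_inv]
      rfl
    · simpa using Submodule.zero_mem _
    · intro y z _ _ hy hz
      rw [star_add]
      exact add_mem hy hz
    · intro c y _ hy
      rw [star_smul]
      exact Submodule.smul_mem _ _ hy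

lemma tauL_Uu_zpow (τL : BH →ₗ[ℂ] ℂ) (au bu : unitary BH)
    (ha : IsHaarUnitary ⇑τL (au : BH)) (hb : IsHaarUnitary ⇑τL (bu : BH))
    (hfree : IsFreeFamily ⇑τL (fun i : Bool =>
      if i then ((StarAlgebra.adjoin ℂ {(au : BH)} : StarSubalgebra ℂ BH) : Set BH)
      else ((StarAlgebra.adjoin ℂ {(bu : BH)} : StarSubalgebra ℂ BH) : Set BH)))
    {k : ℕ} (hk : k ≠ 0) {m : ℤ} (hm : m ≠ 0) :
    τL ((Uu au bu k ^ m : unitary BH) : BH) = 0 := by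
  rw [← blk_map_prod au bu hm]
  exact tau_word τL au bu ha hb hfree _ (blk_alt hk m) (blk_ne_nil hm)

lemma haar_Uu (τL : BH →ₗ[ℂ] ℂ) (au bu : unitary BH)
    (ha : IsHaarUnitary ⇑τL (au : BH)) (hb : IsHaarUnitary ⇑τL (bu : BH))
    (hfree : IsFreeFamily ⇑τL (fun i : Bool =>
      if i then ((StarAlgebra.adjoin ℂ {(au : BH)} : StarSubalgebra ℂ BH) : Set BH)
      else ((StarAlgebra.adjoin ℂ {(bu : BH)} : StarSubalgebra ℂ BH) : Set BH)))
    {k : ℕ} (hk : k ≠ 0) :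
    IsHaarUnitary ⇑τL ((Uu au bu k : unitary BH) : BH) := by
  refine ⟨(Uu au bu k).2, fun n hn => ⟨?_, ?_⟩⟩
  · rw [← SubmonoidClass.coe_pow, ← zpow_natCast]
    exact tauL_Uu_zpow τL au bu ha hb hfree hk (by exact_mod_cast hn.ne')
  · rw [← coe_zpow_neg_natCast]
    exact tauL_Uu_zpow τL au bu ha hb hfree hk (by
      have : (n : ℤ) ≠ 0 := by exact_mod_cast hn.ne'
      omega)

lemma mem_Vk_of_centered (τL : BH →ₗ[ℂ] ℂ) (au bu : unitary BH)
    (ha : IsHaarUnitary ⇑τL (au : BH)) (hb : IsHaarUnitary ⇑τL (bu : BH))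
    (hfree : IsFreeFamily ⇑τL (fun i : Bool =>
      if i then ((StarAlgebra.adjoin ℂ {(au : BH)} : StarSubalgebra ℂ BH) : Set BH)
      else ((StarAlgebra.adjoin ℂ {(bu : BH)} : StarSubalgebra ℂ BH) : Set BH)))
    (hτ1 : τL 1 = 1) {k : ℕ} (hk : k ≠ 0) {x : BH}
    (hx : x ∈ StarAlgebra.adjoin ℂ {((Uu au bu k : unitary BH) : BH)}) (hτx : τL x = 0) :
    x ∈ Vk au bu k := by
  have h1 : x ∈ Submodule.span ℂ
      (Set.range fun n : ℤ => ((Uu au bu k ^ n : unitary BH) : BH)) :=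
    mem_span_zpow_of_mem_adjoin _ hx
  have h2 : x ∈ Vk au bu k ⊔ (ℂ ∙ (1 : BH)) := by
    refine Submodule.span_le.mpr ?_ h1
    rintro _ ⟨n, rfl⟩
    rw [SetLike.mem_coe]
    by_cases hn : n = 0
    · subst hn
      refine Submodule.mem_sup_right ?_
      show ((Uu au bu k ^ (0 : ℤ) : unitary BH) : BH) ∈ (ℂ ∙ (1 : BH))
      have h0 : ((Uu au bu k ^ (0 : ℤ) : unitary BH) : BH) = (1 : BH) := by
        rw [zpow_zero]; rfl
      rw [h0]
      exact Submodule.mem_span_singleton_self 1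
    · refine Submodule.mem_sup_left (Submodule.subset_span ?_)
      exact ⟨n, hn, rfl⟩
  obtain ⟨y, hy, z, hz, rfl⟩ := Submodule.mem_sup.mp h2
  obtain ⟨c, rfl⟩ := Submodule.mem_span_singleton.mp hz
  have hτy : τL y = 0 := by
    have hle : Vk au bu k ≤ LinearMap.ker τL := by
      rw [Vk, Submodule.span_le]
      rintro _ ⟨n, hn, rfl⟩
      rw [SetLike.mem_coe, LinearMap.mem_ker]
      exact tauL_Uu_zpow τL au bu ha hb hfree hk hn
    exact LinearMap.mem_ker.mp (hle hy)
  have hc : c = 0 := by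
    have := hτx
    rw [map_add, hτy, zero_add, map_smul, hτ1, smul_eq_mul, mul_one] at this
    exact this
  subst hc
  simpa using hy

lemma chain'_ofFn {α : Type*} {n : ℕ} (f : Fin n → α) (R : α → α → Prop)
    (h : ∀ (j : ℕ) (hj : j + 1 < n), R (f ⟨j, by omega⟩) (f ⟨j + 1, hj⟩)) :
    List.Chain' R (List.ofFn f) := by
  simp only [List.Chain', List.isChain_iff_getElem]
  intro i hi
  rw [List.length_ofFn] at hi
  simp only [List.getElem_ofFn]
  exact h i (by omega)

end Aux


theorem aux_main
    {H : Type*} [NormedAddCommGroup H] [InnerProductSpace ℂ H] [CompleteSpace H]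
    (ξ : H) (hξnorm : ‖ξ‖ = 1)
    (τ : (H →L[ℂ] H) → ℂ) (hτ : τ = fun z => ⟪ξ, z ξ⟫)
    (a b : H →L[ℂ] H)
    (ha : IsHaarUnitary τ a) (hb : IsHaarUnitary τ b)
    (hfree : IsFreeFamily τ (fun i : Bool =>
      if i then ((StarAlgebra.adjoin ℂ {a} : StarSubalgebra ℂ (H →L[ℂ] H)) : Set (H →L[ℂ] H))
      else ((StarAlgebra.adjoin ℂ {b} : StarSubalgebra ℂ (H →L[ℂ] H)) : Set (H →L[ℂ] H)))) :
    (∀ k : ℕ, 0 < k → IsHaarUnitary τ (a ^ k * (star b) ^ k)) ∧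
      IsFreeFamily τ (fun k : {k : ℕ // 0 < k} =>
        ((StarAlgebra.adjoin ℂ {a ^ (k : ℕ) * (star b) ^ (k : ℕ)} :
          StarSubalgebra ℂ (H →L[ℂ] H)) : Set (H →L[ℂ] H))) := by
  subst hτ
  set au : unitary (H →L[ℂ] H) := ⟨a, ha.1⟩ with hau
  set bu : unitary (H →L[ℂ] H) := ⟨b, hb.1⟩ with hbu
  have ha' : IsHaarUnitary ⇑(tauL ξ) ((au : unitary (H →L[ℂ] H)) : H →L[ℂ] H) := ha
  have hb' : IsHaarUnitary ⇑(tauL ξ) ((bu : unitary (H →L[ℂ] H)) : H →L[ℂ] H) := hb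
  have hfree' : IsFreeFamily ⇑(tauL ξ) (fun i : Bool =>
      if i then ((StarAlgebra.adjoin ℂ {((au : unitary (H →L[ℂ] H)) : H →L[ℂ] H)} :
        StarSubalgebra ℂ (H →L[ℂ] H)) : Set (H →L[ℂ] H))
      else ((StarAlgebra.adjoin ℂ {((bu : unitary (H →L[ℂ] H)) : H →L[ℂ] H)} :
        StarSubalgebra ℂ (H →L[ℂ] H)) : Set (H →L[ℂ] H))) := hfree
  have hτ1 : tauL ξ 1 = 1 := by
    show (⟪ξ, (1 : H →L[ℂ] H) ξ⟫ : ℂ) = 1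
    rw [ContinuousLinearMap.one_apply, inner_self_eq_norm_sq_to_K, hξnorm]
    norm_num
  have hUcoe : ∀ k : ℕ, ((Uu au bu k : unitary (H →L[ℂ] H)) : H →L[ℂ] H)
      = a ^ k * (star b) ^ k := by
    intro k
    have h1 : ((Uu au bu k : unitary (H →L[ℂ] H)) : H →L[ℂ] H)
        = ((au ^ (k : ℤ) : unitary (H →L[ℂ] H)) : H →L[ℂ] H)
          * ((bu ^ (-(k : ℤ)) : unitary (H →L[ℂ] H)) : H →L[ℂ] H) := rfl
    rw [h1, coe_zpow_natCast, coe_zpow_neg_natCast]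
  constructor
  · intro k hk
    have h := haar_Uu (tauL ξ) au bu ha' hb' hfree' (k := k) hk.ne'
    rw [hUcoe k] at h
    exact h
  · intro n hn x g hx hτx hne
    have hmemV : ∀ j, x j ∈ Vk au bu (g j : ℕ) := by
      intro j
      have h : x j ∈ StarAlgebra.adjoin ℂ
          {a ^ ((g j : ℕ)) * (star b) ^ ((g j : ℕ))} := hx j
      rw [← hUcoe ((g j : ℕ))] at h
      exact mem_Vk_of_centered (tauL ξ) au bu ha' hb' hfree' hτ1
        (Nat.pos_iff_ne_zero.mp (g j).2) h (hτx j)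
    obtain ⟨m, rfl⟩ : ∃ m, n = m + 1 := ⟨n - 1, by omega⟩
    set rest : List ({k : ℕ // 0 < k} × (H →L[ℂ] H)) :=
      List.ofFn (fun i : Fin m => (g i.succ, x i.succ)) with hrest
    have hrestmap : rest.map Prod.snd = List.ofFn (fun i : Fin m => x i.succ) := by
      rw [hrest, List.map_ofFn]
      rfl
    show tauL ξ ((List.ofFn x).prod) = 0
    rw [List.ofFn_succ, List.prod_cons, ← hrestmap]
    let T : (H →L[ℂ] H) →ₗ[ℂ] ℂ :=
      (tauL ξ).comp (LinearMap.mulRight ℂ ((rest.map Prod.snd).prod))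
    have hker : Vk au bu (g 0 : ℕ) ≤ LinearMap.ker T := by
      rw [Vk, Submodule.span_le]
      rintro _ ⟨n', hn', rfl⟩
      rw [SetLike.mem_coe, LinearMap.mem_ker]
      show tauL ξ (((Uu au bu (g 0) ^ n' : unitary (H →L[ℂ] H)) : H →L[ℂ] H)
        * (rest.map Prod.snd).prod) = 0
      rw [← blk_map_prod au bu hn']
      refine main_ind (tauL ξ) au bu ha' hb' hfree' rest ?_ ?_ (g 0) (etag n') _
        (blk_alt (Nat.pos_iff_ne_zero.mp (g 0).2) n') (blk_getLast? hn') ?_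
      · intro p hp
        rw [hrest, List.mem_ofFn] at hp
        obtain ⟨i, rfl⟩ := hp
        exact hmemV i.succ
      · rw [hrest]
        refine chain'_ofFn _ _ ?_
        intro j hj
        exact hne (j + 1) (by omega)
      · intro p hp
        rw [hrest, List.head?_eq_getElem?, List.getElem?_ofFn] at hp
        split at hp
        · rw [Option.mem_some_iff] at hp
          subst hp
          exact (hne 0 (by omega)).symm
        · simp at hp
    have hx0 := hker (hmemV 0)
    rw [LinearMap.mem_ker] at hx0
    simpa only [T, LinearMap.comp_apply, LinearMap.mulRight_apply] using hx0


/-- If `a, b` are free Haar unitaries in a tracial von Neumann algebra `(M, τ)` (with a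
faithful normal tracial state, realized as the vector state of a trace vector `ξ`), then
`{ a^k b^{-k} : k ≥ 1 }` is a free family of Haar unitaries (freeness of a family of elements
meaning freeness of the family of unital *-algebras they generate).  Note `b⁻¹ = star b`. -/
theorem isFreeFamily_pow_mul_pow_inv_of_free_haarUnitaries
    {H : Type*} [NormedAddCommGroup H] [InnerProductSpace ℂ H] [CompleteSpace H]
    (M : VonNeumannAlgebra H) (ξ : H)
    -- `τ` is a faithful normal tracial state on `M`
    (hξ : IsTraceVector M ξ)
    (τ : (H →L[ℂ] H) → ℂ) (hτ : τ = fun z => ⟪ξ, z ξ⟫)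
    (a b : H →L[ℂ] H) (haM : a ∈ M) (hbM : b ∈ M)
    -- `a` and `b` are free Haar unitaries
    (ha : IsHaarUnitary τ a) (hb : IsHaarUnitary τ b)
    (hfree : IsFreeFamily τ (fun i : Bool =>
      if i then ((StarAlgebra.adjoin ℂ {a} : StarSubalgebra ℂ (H →L[ℂ] H)) : Set (H →L[ℂ] H))
      else ((StarAlgebra.adjoin ℂ {b} : StarSubalgebra ℂ (H →L[ℂ] H)) : Set (H →L[ℂ] H)))) :
    (∀ k : ℕ, 0 < k → IsHaarUnitary τ (a ^ k * (star b) ^ k)) ∧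
      IsFreeFamily τ (fun k : {k : ℕ // 0 < k} =>
        ((StarAlgebra.adjoin ℂ {a ^ (k : ℕ) * (star b) ^ (k : ℕ)} :
          StarSubalgebra ℂ (H →L[ℂ] H)) : Set (H →L[ℂ] H))) := by
  exact aux_main ξ hξ.norm_one τ hτ a b ha hb hfree

end FreeProductPaper
end

section
/- Let M = M₁ * M₂ be a tracial free product of finite von Neumann algebras with trace τ, let u ∈ M₁ be a Haar unitary, and let x = v₁v₂⋯v_l where each v_j is a trace-zero unitary in M_{i(j)} with i(j) ≠ i(j+1), and x ∉ M₁ (i.e., either l ≥ 2, or l = 1 and i(1) = 2). Then the unitaries a := x*ux and b := u are free Haar unitaries in (M, τ); in particular the von Neumann algebra they generate is isomorphic to the free group factor L(F₂). -/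
open scoped ComplexInnerProductSpace

namespace FreeProductPaper

variable {H : Type*} [NormedAddCommGroup H] [InnerProductSpace ℂ H] [CompleteSpace H]

inductive AltWord_s5 {A : Type*} [Mul A] (P : Bool → A → Prop) : Bool → Bool → A → Prop
  | single {s : Bool} {z : A} : P s z → AltWord_s5 P s s z
  | snoc {s e e' : Bool} {w z : A} : AltWord_s5 P s e w → P e' z → e' ≠ e → AltWord_s5 P s e' (w * z)

theorem AltWord_s5.cons {A : Type*} [Semigroup A] {P : Bool → A → Prop} {s e s' : Bool}
    {w z : A} (hz : P s' z) (hw : AltWord_s5 P s e w) : s ≠ s' → AltWord_s5 P s' e (z * w) := by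
  induction hw with
  | single h => exact fun hne => .snoc (.single hz) h hne
  | snoc hw' hz' hne' ih =>
    intro hne
    rw [← mul_assoc]
    exact .snoc (ih hne) hz' hne'

theorem AltWord_s5.mul_alt {A : Type*} [Semigroup A] {P : Bool → A → Prop} {s e s' e' : Bool}
    {w w' : A} (h1 : AltWord_s5 P s e w) (h2 : AltWord_s5 P s' e' w') :
    s' ≠ e → AltWord_s5 P s e' (w * w') := by
  induction h2 with
  | single h => exact fun hne => h1.snoc h hne
  | snoc h2' hz hne2 ih =>
    intro hne
    rw [← mul_assoc]
    exact .snoc (ih hne) hz hne2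

theorem AltWord_s5.exists_list {A : Type*} [Monoid A] {P : Bool → A → Prop} {s e : Bool} {w : A}
    (h : AltWord_s5 P s e w) :
    ∃ L : List (A × Bool), L ≠ [] ∧ (∀ p ∈ L, P p.2 p.1) ∧
      (L.map Prod.snd).Chain' (· ≠ ·) ∧ (L.map Prod.snd).getLast? = some e ∧
      (L.map Prod.fst).prod = w := by
  induction h with
  | single h =>
    rename_i s z
    refine ⟨[(z, s)], by simp, by simp [h], by simp [List.Chain'], by simp, by simp⟩
  | snoc hw hP hne ih =>
    rename_i e' w z
    obtain ⟨L, hne0, hmem, hchain, hlast, hprod⟩ := ih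
    refine ⟨L ++ [(z, e')], by simp, ?_, ?_, ?_, ?_⟩
    · intro p hp
      rcases List.mem_append.mp hp with h | h
      · exact hmem p h
      · simp at h; subst h; exact hP
    · rw [List.map_append]
      simp only [List.Chain']
      rw [List.isChain_append]
      refine ⟨hchain, by simp, ?_⟩
      intro a ha b hb
      simp at hb
      rw [hlast] at ha
      simp at ha
      subst ha; subst hb
      exact hne.symm
    · rw [List.map_append]
      simp
    · rw [List.map_append, List.prod_append]
      simp [hprod]

theorem altword_tau_zero (τ : (H →L[ℂ] H) → ℂ) (S : Bool → Set (H →L[ℂ] H))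
    (hfree : IsFreeFamily τ S) {s e : Bool} {w : H →L[ℂ] H}
    (h : AltWord_s5 (fun b z => z ∈ S b ∧ τ z = 0) s e w) : τ w = 0 := by
  obtain ⟨L, hne, hmem, hchain, -, hprod⟩ := h.exists_list
  have hn : 0 < L.length := List.length_pos_iff.mpr hne
  have key := hfree L.length hn (fun j => (L.get j).1) (fun j => (L.get j).2)
    (fun j => (hmem _ (L.get_mem j)).1) (fun j => (hmem _ (L.get_mem j)).2) ?_
  · rw [show (List.ofFn fun j => (L.get j).1) = L.map Prod.fst from ?_] at key
    · rw [hprod] at key; exact key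
    · have := List.ofFn_getElem_eq_map L Prod.fst
      simpa using this
  · intro j hj
    have hc := List.isChain_iff_getElem.mp hchain j (by simp; omega)
    simpa [List.get_eq_getElem, List.getElem_map] using hc

section Core

variable (M M₁ M₂ : VonNeumannAlgebra H) (ξ : H)
  (τ : (H →L[ℂ] H) → ℂ)

theorem tau_star (hτ : τ = fun z => ⟪ξ, z ξ⟫) :
    ∀ z : H →L[ℂ] H, τ z = 0 → τ (star z) = 0 := by
  subst hτ
  intro z hz
  show ⟪ξ, star z ξ⟫ = 0
  rw [ContinuousLinearMap.star_eq_adjoint, ContinuousLinearMap.adjoint_inner_right,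
    ← inner_conj_symm]
  simp only at hz
  rw [hz]
  simp

theorem tau_tracial (hξ : IsTraceVector M ξ) (hτ : τ = fun z => ⟪ξ, z ξ⟫) :
    ∀ a ∈ M, ∀ b ∈ M, τ (a * b) = τ (b * a) := by
  subst hτ; exact hξ.tracial

theorem tau_conj (hξ : IsTraceVector M ξ) (hτ : τ = fun z => ⟪ξ, z ξ⟫) :
    ∀ w ∈ M, ∀ c ∈ M, w ∈ unitary (H →L[ℂ] H) → τ (star w * c * w) = τ c := by
  intro w hw c hc hwu
  have h1 : τ ((star w * c) * w) = τ (w * (star w * c)) :=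
    tau_tracial M ξ τ hξ hτ _ (mul_mem (star_mem hw) hc) _ hw
  rw [h1, ← mul_assoc, (Unitary.mem_iff.mp hwu).2, one_mul]

theorem tau_conj' (hξ : IsTraceVector M ξ) (hτ : τ = fun z => ⟪ξ, z ξ⟫) :
    ∀ w ∈ M, ∀ c ∈ M, w ∈ unitary (H →L[ℂ] H) → τ (w * c * star w) = τ c := by
  intro w hw c hc hwu
  have h1 : τ ((w * c) * star w) = τ (star w * (w * c)) :=
    tau_tracial M ξ τ hξ hτ _ (mul_mem hw hc) _ (star_mem hw)
  rw [h1, ← mul_assoc, (Unitary.mem_iff.mp hwu).1, one_mul]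

/-- The main word computation, assuming the first letter of `x` lies in `M₂`. -/
theorem core_base (hξ : IsTraceVector M ξ) (hτ : τ = fun z => ⟪ξ, z ξ⟫)
    (hM₁ : M₁ ≤ M) (hM₂ : M₂ ≤ M)
    (hfree : IsFreeFamily τ
      (fun b : Bool => if b then (M₁ : Set (H →L[ℂ] H)) else (M₂ : Set (H →L[ℂ] H))))
    (l : ℕ) (v : Fin (l+1) → (H →L[ℂ] H)) (i : Fin (l+1) → Bool)
    (hv : ∀ j, v j ∈ (if i j then (M₁ : Set (H →L[ℂ] H)) else (M₂ : Set (H →L[ℂ] H))))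
    (hvU : ∀ j, v j ∈ unitary (H →L[ℂ] H)) (hvτ : ∀ j, τ (v j) = 0)
    (halt : ∀ (j : ℕ) (h : j + 1 < l+1), i ⟨j, by omega⟩ ≠ i ⟨j+1, h⟩)
    (h0 : i 0 = false)
    (L : List ((H →L[ℂ] H) × Bool)) (hL : L ≠ [])
    (hcond : ∀ p ∈ L,
      (p.2 = true → ∃ c, c ∈ M₁ ∧ τ c = 0 ∧
        p.1 = star ((List.ofFn v).prod) * c * (List.ofFn v).prod) ∧
      (p.2 = false → p.1 ∈ M₁ ∧ τ p.1 = 0))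
    (hchain : (L.map Prod.snd).Chain' (· ≠ ·)) :
    τ ((L.map Prod.fst).prod) = 0 := by
  classical
  set x : H →L[ℂ] H := (List.ofFn v).prod with hxdef
  set P : Bool → (H →L[ℂ] H) → Prop :=
    fun b z => z ∈ (if b then (M₁ : Set (H →L[ℂ] H)) else (M₂ : Set (H →L[ℂ] H))) ∧ τ z = 0
    with hPdef
  -- basic memberships
  have hmemM : ∀ (b : Bool) (z : H →L[ℂ] H), z ∈ (if b then (M₁ : Set (H →L[ℂ] H)) else (M₂ : Set (H →L[ℂ] H))) → z ∈ M := by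
    intro b z hz
    cases b
    · simp only [if_neg, Bool.false_eq_true, ↓reduceIte] at hz; exact hM₂ hz
    · simp only [if_pos] at hz; exact hM₁ hz
  have hstar12 : ∀ (b : Bool) (z : H →L[ℂ] H), z ∈ (if b then (M₁ : Set (H →L[ℂ] H)) else (M₂ : Set (H →L[ℂ] H))) →
      star z ∈ (if b then (M₁ : Set (H →L[ℂ] H)) else (M₂ : Set (H →L[ℂ] H))) := by
    intro b z hz
    cases b <;> simp only [if_neg, if_pos, Bool.false_eq_true, SetLike.mem_coe] at hz ⊢ <;>
      exact star_mem hz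
  have hvM : ∀ j, v j ∈ M := fun j => hmemM _ _ (hv j)
  have hxM : x ∈ M := by
    apply list_prod_mem
    intro z hz
    rw [List.mem_ofFn] at hz
    obtain ⟨j, rfl⟩ := hz
    exact hvM j
  have hxU : x ∈ unitary (H →L[ℂ] H) := by
    apply Submonoid.list_prod_mem
    intro z hz
    rw [List.mem_ofFn] at hz
    obtain ⟨j, rfl⟩ := hz
    exact hvU j
  have hx1 : x * star x = 1 := (Unitary.mem_iff.mp hxU).2
  have hx2 : star x * x = 1 := (Unitary.mem_iff.mp hxU).1
  -- dropping
  have hdrop : ∀ (m : ℕ) (hm : m < l+1),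
      (List.ofFn v).drop m = v ⟨m, hm⟩ :: (List.ofFn v).drop (m+1) := by
    intro m hm
    rw [List.drop_eq_getElem_cons (by simpa using hm), List.getElem_ofFn]
  have hdroplast : (List.ofFn v).drop (l+1) = [] := by
    apply List.drop_eq_nil_of_le
    simp
  -- the Z block lemma
  have Z : ∀ (k m : ℕ) (hm : m < l+1), m + k = l → ∀ d : H →L[ℂ] H, d ∈ M₁ → τ d = 0 →
      AltWord_s5 P (i ⟨m, hm⟩) (i ⟨m, hm⟩)
        (((List.ofFn v).drop m).prod * d * star (((List.ofFn v).drop m).prod)) := by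
    intro k
    induction k with
    | zero =>
      intro m hm hmk d hd hdτ
      have hml : m = l := by omega
      subst hml
      rw [hdrop m hm, hdroplast, List.prod_cons, List.prod_nil, mul_one]
      rcases hb : i ⟨m, hm⟩ with _ | _
      · -- i m = false : three letters
        have hvm : P false (v ⟨m, hm⟩) := ⟨by rw [← hb]; exact hv _, hvτ _⟩
        have hdm : P true d := ⟨by simpa using hd, hdτ⟩
        have hvsm : P false (star (v ⟨m, hm⟩)) := by
          refine ⟨?_, tau_star ξ τ hτ _ (hvτ _)⟩
          have := hstar12 _ _ (hv ⟨m, hm⟩)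
          rwa [hb] at this
        have A1 : AltWord_s5 P false false (v ⟨m, hm⟩) := AltWord_s5.single hvm
        have A2 : AltWord_s5 P false true (v ⟨m, hm⟩ * d) := A1.snoc hdm (by simp)
        exact A2.snoc hvsm (by simp)
      · -- i m = true : merged single letter
        refine AltWord_s5.single ⟨?_, ?_⟩
        · have h1 : v ⟨m, hm⟩ ∈ (M₁ : Set (H →L[ℂ] H)) := by
            have := hv ⟨m, hm⟩; rwa [hb, if_pos rfl] at this
          simp only [if_pos rfl, SetLike.mem_coe] at h1 ⊢
          exact mul_mem (mul_mem h1 hd) (star_mem h1)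
        · rw [tau_conj' M ξ τ hξ hτ _ (hvM ⟨m, hm⟩) _ (hM₁ hd) (hvU _)]; exact hdτ
    | succ k IHk =>
      intro m hm hmk d hd hdτ
      have hm1 : m + 1 < l + 1 := by omega
      have W := IHk (m+1) hm1 (by omega) d hd hdτ
      have hne : i ⟨m, by omega⟩ ≠ i ⟨m+1, hm1⟩ := halt m hm1
      have step1 := AltWord_s5.cons ⟨hv ⟨m, hm⟩, hvτ _⟩ W hne.symm
      have step2 := step1.snoc ⟨hstar12 _ _ (hv ⟨m, hm⟩), tau_star ξ τ hτ _ (hvτ _)⟩ hne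
      rw [hdrop m hm, List.prod_cons, star_mul]
      have heq : (v ⟨m, hm⟩ * ((List.ofFn v).drop (m+1)).prod) * d *
          (star (((List.ofFn v).drop (m+1)).prod) * star (v ⟨m, hm⟩)) =
          (v ⟨m, hm⟩ * (((List.ofFn v).drop (m+1)).prod * d *
            star (((List.ofFn v).drop (m+1)).prod))) * star (v ⟨m, hm⟩) := by
        simp only [mul_assoc]
      rw [heq]
      exact step2
  -- the conjugated single blocks
  have block : ∀ p ∈ L, AltWord_s5 P p.2 p.2 (x * p.1 * star x) := by
    intro p hp
    rcases hb : p.2 with _ | _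
    · obtain ⟨hm, hτ0⟩ := (hcond p hp).2 hb
      have := Z l 0 (by omega) (by omega) p.1 hm hτ0
      rw [List.drop_zero] at this
      have h00 : i ⟨0, by omega⟩ = false := h0
      rwa [h00] at this
    · obtain ⟨c, hc, hcτ, hpc⟩ := (hcond p hp).1 hb
      have hxc : x * p.1 * star x = c := by
        rw [hpc]
        simp only [← mul_assoc]
        rw [hx1, one_mul, mul_assoc, hx1, mul_one]
      rw [hxc]
      exact AltWord_s5.single ⟨by simpa using hc, hcτ⟩
  -- folding blocks into a word
  have fold : ∀ (Lc : List ((H →L[ℂ] H) × Bool)) (h : Lc ≠ []),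
      (∀ p ∈ Lc, AltWord_s5 P p.2 p.2 (x * p.1 * star x)) →
      (Lc.map Prod.snd).Chain' (· ≠ ·) →
      ∃ e, AltWord_s5 P ((Lc.head h).2) e ((Lc.map (fun p => x * p.1 * star x)).prod) := by
    intro Lc
    induction Lc with
    | nil => simp
    | cons p T ih =>
      intro _ hblocks hch
      cases T with
      | nil =>
        refine ⟨p.2, ?_⟩
        simp only [List.map_cons, List.map_nil, List.prod_cons, List.prod_nil, mul_one,
          List.head_cons]
        exact hblocks p (by simp)
      | cons q T' =>
        have hch' : ((q :: T').map Prod.snd).Chain' (· ≠ ·) := by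
          rw [List.map_cons] at hch ⊢
          exact (List.isChain_cons.mp hch).2
        have hne : p.2 ≠ q.2 := by
          rw [List.map_cons, List.map_cons] at hch
          simp only [List.Chain'] at hch
          rw [List.isChain_cons_cons] at hch
          exact hch.1
        obtain ⟨e, hW⟩ := ih (by simp) (fun r hr => hblocks r (by simp [hr])) hch'
        refine ⟨e, ?_⟩
        simp only [List.map_cons, List.prod_cons, List.head_cons]
        simp only [List.head_cons] at hW
        exact AltWord_s5.mul_alt (hblocks p (by simp)) hW hne.symm
  -- conjugation of the full product
  have hconjprod : ∀ Lc : List ((H →L[ℂ] H) × Bool),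
      x * (Lc.map Prod.fst).prod * star x = (Lc.map (fun p => x * p.1 * star x)).prod := by
    intro Lc
    induction Lc with
    | nil => simp [hx1]
    | cons p T ih =>
      simp only [List.map_cons, List.prod_cons]
      rw [← ih]
      simp only [mul_assoc]
      congr 1
      rw [show star x * (x * ((T.map Prod.fst).prod * star x)) =
        (T.map Prod.fst).prod * star x from by rw [← mul_assoc, hx2, one_mul]]
  -- putting it together
  have hPM : ∀ p ∈ L, p.1 ∈ M := by
    intro p hp
    rcases hb : p.2 with _ | _
    · exact hM₁ ((hcond p hp).2 hb).1
    · obtain ⟨c, hc, -, hpc⟩ := (hcond p hp).1 hb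
      rw [hpc]
      exact mul_mem (mul_mem (star_mem hxM) (hM₁ hc)) hxM
  have hprodM : (L.map Prod.fst).prod ∈ M := by
    apply list_prod_mem
    intro z hz
    rw [List.mem_map] at hz
    obtain ⟨p, hp, rfl⟩ := hz
    exact hPM p hp
  have htr : τ (x * (L.map Prod.fst).prod * star x) = τ ((L.map Prod.fst).prod) := by
    rw [tau_tracial M ξ τ hξ hτ _ (mul_mem hxM hprodM) _ (star_mem hxM), ← mul_assoc, hx2,
      one_mul]
  rw [← htr, hconjprod]
  obtain ⟨e, hW⟩ := fold L hL block hchain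
  exact altword_tau_zero τ _ hfree hW


/-- The main word computation, general form. -/
theorem core (hξ : IsTraceVector M ξ) (hτ : τ = fun z => ⟪ξ, z ξ⟫)
    (hM₁ : M₁ ≤ M) (hM₂ : M₂ ≤ M)
    (hfree : IsFreeFamily τ
      (fun b : Bool => if b then (M₁ : Set (H →L[ℂ] H)) else (M₂ : Set (H →L[ℂ] H)))) :
    ∀ (l : ℕ) (v : Fin (l+1) → (H →L[ℂ] H)) (i : Fin (l+1) → Bool),
    (∀ j, v j ∈ (if i j then (M₁ : Set (H →L[ℂ] H)) else (M₂ : Set (H →L[ℂ] H)))) →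
    (∀ j, v j ∈ unitary (H →L[ℂ] H)) → (∀ j, τ (v j) = 0) →
    (∀ (j : ℕ) (h : j + 1 < l+1), i ⟨j, by omega⟩ ≠ i ⟨j+1, h⟩) →
    (i 0 = false ∨ 1 ≤ l) →
    ∀ L : List ((H →L[ℂ] H) × Bool), L ≠ [] →
    (∀ p ∈ L,
      (p.2 = true → ∃ c, c ∈ M₁ ∧ τ c = 0 ∧
        p.1 = star ((List.ofFn v).prod) * c * (List.ofFn v).prod) ∧
      (p.2 = false → p.1 ∈ M₁ ∧ τ p.1 = 0)) →
    (L.map Prod.snd).Chain' (· ≠ ·) →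
    τ ((L.map Prod.fst).prod) = 0 := by
  intro l
  induction l with
  | zero =>
    intro v i hv hvU hvτ halt hx
    exact core_base M M₁ M₂ ξ τ hξ hτ hM₁ hM₂ hfree 0 v i hv hvU hvτ halt
      (hx.resolve_right (by omega))
  | succ l IH =>
    intro v i hv hvU hvτ halt hx L hL hcond hchain
    by_cases h0 : i 0 = false
    · exact core_base M M₁ M₂ ξ τ hξ hτ hM₁ hM₂ hfree (l+1) v i hv hvU hvτ halt h0
        L hL hcond hchain
    · -- peel off the first letter
      have h0' : i 0 = true := by revert h0; cases (i 0) <;> simp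
      have hv0 : v 0 ∈ M₁ := by have := hv 0; rwa [h0', if_pos rfl] at this
      have hsplit : (List.ofFn v).prod = v 0 * (List.ofFn fun j : Fin (l+1) => v j.succ).prod := by
        rw [List.ofFn_succ, List.prod_cons]
      have halt' : ∀ (j : ℕ) (h : j + 1 < l+1),
          (fun j : Fin (l+1) => i j.succ) ⟨j, by omega⟩ ≠ (fun j : Fin (l+1) => i j.succ) ⟨j+1, h⟩ := by
        intro j h
        have := halt (j+1) (by omega)
        simpa [Fin.succ] using this
      have hx' : (fun j : Fin (l+1) => i j.succ) 0 = false ∨ 1 ≤ l := by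
        by_cases hl : 1 ≤ l
        · exact Or.inr hl
        · left
          have hl0 : l = 0 := by omega
          subst hl0
          have h01 := halt 0 (by omega)
          rw [show (⟨0, by omega⟩ : Fin 2) = 0 from rfl] at h01
          have hne : i 0 ≠ i ⟨1, by omega⟩ := h01
          show i (Fin.succ 0) = false
          have : Fin.succ (0 : Fin 1) = (⟨1, by omega⟩ : Fin 2) := rfl
          rw [this]
          revert hne; rw [h0']; cases (i (⟨1, by omega⟩ : Fin 2)) <;> simp
      refine IH (fun j => v j.succ) (fun j => i j.succ) (fun j => hv j.succ)
        (fun j => hvU j.succ) (fun j => hvτ j.succ) halt' hx' L hL ?_ hchain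
      intro p hp
      refine ⟨?_, ((hcond p hp).2)⟩
      intro hpt
      obtain ⟨c, hc, hcτ, hpc⟩ := (hcond p hp).1 hpt
      refine ⟨star (v 0) * c * v 0, ?_, ?_, ?_⟩
      · exact mul_mem (mul_mem (star_mem hv0) hc) hv0
      · rw [tau_conj M ξ τ hξ hτ _ (hM₁ hv0) _ (hM₁ hc) (hvU 0)]; exact hcτ
      · rw [hpc, hsplit]
        simp only [star_mul, mul_assoc]


end Core

/-- Conjugation by a unitary, as a star algebra homomorphism. -/
noncomputable def conjSAH (x : H →L[ℂ] H) (h1 : x * star x = 1) (h2 : star x * x = 1) :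
    (H →L[ℂ] H) →⋆ₐ[ℂ] (H →L[ℂ] H) where
  toFun := fun z => star x * z * x
  map_one' := by simp only [mul_one, h2]
  map_mul' := fun a b => by
    simp only [mul_assoc]
    congr 2
    rw [← mul_assoc x (star x), h1, one_mul]
  map_zero' := by simp
  map_add' := fun a b => by
    show star x * (a + b) * x = star x * a * x + star x * b * x
    rw [mul_add, add_mul]
  commutes' := fun c => by
    show star x * (algebraMap ℂ (H →L[ℂ] H) c) * x = algebraMap ℂ (H →L[ℂ] H) c
    rw [Algebra.algebraMap_eq_smul_one]
    rw [mul_smul_comm, mul_one, smul_mul_assoc, h2]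
  map_star' := fun a => by
    show star x * star a * x = star (star x * a * x)
    simp [star_mul, mul_assoc]

theorem conjSAH_adjoin (x u : H →L[ℂ] H) (h1 : x * star x = 1) (h2 : star x * x = 1) :
    StarAlgebra.adjoin ℂ {star x * u * x} =
      StarSubalgebra.map (conjSAH x h1 h2) (StarAlgebra.adjoin ℂ {u}) := by
  rw [StarAlgHom.map_adjoin]
  congr 1
  simp [conjSAH]


/-- Let `M = M₁ * M₂` be a tracial free product (here `Bool` indexes the factors, `true ↦ M₁`,
`false ↦ M₂`), `u ∈ M₁` a Haar unitary, and `x = v 0 * ⋯ * v (l-1)` an alternating word of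
trace-zero unitaries with `x ∉ M₁` (i.e. `l ≥ 2`, or `l = 1` with the single letter in `M₂`).
Then `a := x* u x` and `b := u` are free Haar unitaries: each is a Haar unitary and the
*-algebras they generate are free with respect to `τ`; equivalently (and in particular) the
von Neumann algebra they generate is a copy of the free group factor `L(F₂)`. -/
theorem conjugated_haarUnitary_free_in_free_product
    {H : Type*} [NormedAddCommGroup H] [InnerProductSpace ℂ H] [CompleteSpace H]
    (M M₁ M₂ : VonNeumannAlgebra H) (ξ : H)
    -- `τ := fun z => ⟪ξ, z ξ⟫` is a faithful normal tracial state on `M`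
    (hξ : IsTraceVector M ξ)
    (τ : (H →L[ℂ] H) → ℂ) (hτ : τ = fun z => ⟪ξ, z ξ⟫)
    -- `M₁` and `M₂` are von Neumann subalgebras of `M`, generating `M` and free w.r.t. `τ`
    (hM₁ : M₁ ≤ M) (hM₂ : M₂ ≤ M)
    (hgen : (M : Set (H →L[ℂ] H)) =
      Set.centralizer (Set.centralizer ((M₁ : Set (H →L[ℂ] H)) ∪ (M₂ : Set (H →L[ℂ] H)))))
    (hfree : IsFreeFamily τ
      (fun b : Bool => if b then (M₁ : Set (H →L[ℂ] H)) else (M₂ : Set (H →L[ℂ] H))))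
    -- `u ∈ M₁` is a Haar unitary
    (u : H →L[ℂ] H) (huM : u ∈ M₁) (hu : IsHaarUnitary τ u)
    -- `x = v 0 * ⋯ * v (l-1)` is an alternating word of trace-zero unitaries,
    -- with letter `v j` in the factor indexed by `i j`
    (l : ℕ) (hl : 1 ≤ l) (v : Fin l → (H →L[ℂ] H)) (i : Fin l → Bool)
    (hv : ∀ j, v j ∈ (if i j then (M₁ : Set (H →L[ℂ] H)) else (M₂ : Set (H →L[ℂ] H))))
    (hvU : ∀ j, v j ∈ unitary (H →L[ℂ] H))
    (hvτ : ∀ j, τ (v j) = 0)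
    (halt : ∀ (j : ℕ) (h : j + 1 < l), i ⟨j, by omega⟩ ≠ i ⟨j + 1, h⟩)
    -- `x ∉ M₁`: either `l ≥ 2`, or `l = 1` and the single letter lies in `M₂`
    (hx : 2 ≤ l ∨ (l = 1 ∧ ∀ j, i j = false))
    (x : H →L[ℂ] H) (hxdef : x = (List.ofFn v).prod) :
    -- `a := x* u x` and `b := u` are free Haar unitaries
    IsHaarUnitary τ (star x * u * x) ∧ IsHaarUnitary τ u ∧
      IsFreeFamily τ (fun c : Bool =>
        if c then ((StarAlgebra.adjoin ℂ {star x * u * x} :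
            StarSubalgebra ℂ (H →L[ℂ] H)) : Set (H →L[ℂ] H))
        else ((StarAlgebra.adjoin ℂ {u} :
            StarSubalgebra ℂ (H →L[ℂ] H)) : Set (H →L[ℂ] H))) := by
  subst hxdef
  obtain ⟨l', rfl⟩ : ∃ l', l = l' + 1 := ⟨l - 1, by omega⟩
  have hmemM : ∀ (b : Bool) (z : H →L[ℂ] H),
      z ∈ (if b then (M₁ : Set (H →L[ℂ] H)) else (M₂ : Set (H →L[ℂ] H))) → z ∈ M := by
    intro b z hz
    cases b
    · simp only [if_neg, Bool.false_eq_true, ↓reduceIte] at hz; exact hM₂ hz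
    · simp only [if_pos] at hz; exact hM₁ hz
  have hvM : ∀ j, v j ∈ M := fun j => hmemM _ _ (hv j)
  have hxM : (List.ofFn v).prod ∈ M := by
    apply list_prod_mem
    intro z hz
    rw [List.mem_ofFn] at hz
    obtain ⟨j, rfl⟩ := hz
    exact hvM j
  have hxU : (List.ofFn v).prod ∈ unitary (H →L[ℂ] H) := by
    apply Submonoid.list_prod_mem
    intro z hz
    rw [List.mem_ofFn] at hz
    obtain ⟨j, rfl⟩ := hz
    exact hvU j
  set x : H →L[ℂ] H := (List.ofFn v).prod with hxdef
  have hx1 : x * star x = 1 := (Unitary.mem_iff.mp hxU).2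
  have hx2 : star x * x = 1 := (Unitary.mem_iff.mp hxU).1
  have huM' : u ∈ M := hM₁ huM
  have hxcancel : ∀ R : H →L[ℂ] H, x * (star x * R) = R := by
    intro R; rw [← mul_assoc, hx1, one_mul]
  have hpow : ∀ (w : H →L[ℂ] H) (n : ℕ), (star x * w * x) ^ n = star x * w ^ n * x := by
    intro w n
    induction n with
    | zero => rw [pow_zero, pow_zero, mul_one, hx2]
    | succ n ih =>
      rw [pow_succ, ih, pow_succ]
      simp only [mul_assoc]
      rw [hxcancel]
  have hstar3 : star (star x * u * x) = star x * star u * x := by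
    simp only [star_mul, star_star, mul_assoc]
  have haarA : IsHaarUnitary τ (star x * u * x) := by
    constructor
    · exact mul_mem (mul_mem (Unitary.star_mem hxU) hu.1) hxU
    · intro n hn
      constructor
      · rw [hpow u n, tau_conj M ξ τ hξ hτ _ hxM _ (pow_mem huM' n) hxU]
        exact (hu.2 n hn).1
      · rw [hstar3, hpow (star u) n,
          tau_conj M ξ τ hξ hτ _ hxM _ (pow_mem (star_mem huM') n) hxU]
        exact (hu.2 n hn).2
  refine ⟨haarA, hu, ?_⟩
  -- the freeness statement
  intro n hn z g hmem hzτ halt'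
  have hadj : StarAlgebra.adjoin ℂ {star x * u * x} =
      StarSubalgebra.map (conjSAH x hx1 hx2) (StarAlgebra.adjoin ℂ {u}) :=
    conjSAH_adjoin x u hx1 hx2
  have hBM₁ : (StarAlgebra.adjoin ℂ {u} : StarSubalgebra ℂ (H →L[ℂ] H)) ≤
      M₁.toStarSubalgebra := by
    apply StarAlgebra.adjoin_le
    intro w hw
    rw [Set.mem_singleton_iff] at hw
    subst hw
    exact huM
  have hx' : i 0 = false ∨ 1 ≤ l' := by
    rcases hx with h | ⟨h1, h2⟩
    · right; omega
    · left; exact h2 0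
  set L : List ((H →L[ℂ] H) × Bool) := List.ofFn (fun j => (z j, g j)) with hLdef
  have hLne : L ≠ [] := by
    have : L.length = n := by simp [hLdef]
    intro hcon
    rw [hcon] at this
    simp at this
    omega
  have hcond : ∀ p ∈ L,
      (p.2 = true → ∃ c, c ∈ M₁ ∧ τ c = 0 ∧ p.1 = star x * c * x) ∧
      (p.2 = false → p.1 ∈ M₁ ∧ τ p.1 = 0) := by
    intro p hp
    rw [hLdef, List.mem_ofFn] at hp
    obtain ⟨j, rfl⟩ := hp
    constructor
    · intro hpt
      replace hpt : g j = true := hpt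
      have hm := hmem j
      simp only at hm
      rw [hpt, if_pos rfl, SetLike.mem_coe, hadj, StarSubalgebra.mem_map] at hm
      obtain ⟨c, hc, hψ⟩ := hm
      have hcM₁ : c ∈ M₁ := hBM₁ hc
      have hψ' : z j = star x * c * x := hψ.symm
      refine ⟨c, hcM₁, ?_, hψ'⟩
      have := hzτ j
      rw [hψ'] at this
      rwa [tau_conj M ξ τ hξ hτ _ hxM _ (hM₁ hcM₁) hxU] at this
    · intro hpf
      replace hpf : g j = false := hpf
      have hm := hmem j
      simp only at hm
      rw [hpf, if_neg (by simp), SetLike.mem_coe] at hm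
      exact ⟨hBM₁ hm, hzτ j⟩
  have hchain : (L.map Prod.snd).Chain' (· ≠ ·) := by
    rw [hLdef, List.map_ofFn]
    apply List.isChain_iff_getElem.mpr
    intro k hk
    simp only [List.length_ofFn] at hk
    have := halt' k (by omega)
    simpa using this
  have key := core M M₁ M₂ ξ τ hξ hτ hM₁ hM₂ hfree l' v i hv hvU hvτ halt hx'
    L hLne hcond hchain
  rw [hLdef, List.map_ofFn] at key
  exact key


end FreeProductPaper
end
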